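/- arXiv:1912.10403 — 4 statements merged into one kernel-verified Lean document; each statement's English description precedes it below -/
import Mathlib

section
/- Let p ≥ 1 be an integer, and let F(λ) = μ·∏_{i=1}^{p}(λ − α_i) and G(λ) = ν·∏_{i=1}^{p}(λ − β_i) be real polynomials of degree p with μ, ν ≠ 0, α_1 < ⋯ < α_p, β_1 < ⋯ < β_p, G ≪ F, and |μ| > |ν|. Then F − G has p distinct real roots γ_1 < ⋯ < γ_p satisfying γ_i ∈ (α_i, β_{i+1}) for i = 1,…,p−1 and γ_p > α_p. -/
open Polynomial

open Finset in
lemma aux_main (p : ℕ) (hp : 1 ≤ p) (μ ν : ℝ) (hμ : 0 < μ) (hν : 0 < ν)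
    (hlt : ν < μ) (α β : Fin p → ℝ) (hα : StrictMono α) (hβ : StrictMono β)
    (hint1 : ∀ i, β i < α i)
    (hint2 : ∀ (i : Fin p) (h : (i : ℕ) + 1 < p), α i < β ⟨(i : ℕ) + 1, h⟩) :
    ∃ γ : Fin p → ℝ, StrictMono γ ∧
      C μ * ∏ i, (X - C (α i)) - C ν * ∏ i, (X - C (β i)) =
        C (μ - ν) * ∏ i, (X - C (γ i)) ∧
      (∀ (i : Fin p) (h : (i : ℕ) + 1 < p), α i < γ i ∧ γ i < β ⟨(i : ℕ) + 1, h⟩) ∧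
      α ⟨p - 1, Nat.sub_lt hp Nat.one_pos⟩ < γ ⟨p - 1, Nat.sub_lt hp Nat.one_pos⟩ := by
  set H : ℝ[X] := C μ * ∏ i, (X - C (α i)) - C ν * ∏ i, (X - C (β i)) with hH
  have heval : ∀ x : ℝ, H.eval x = μ * ∏ i, (x - α i) - ν * ∏ i, (x - β i) := by
    intro x; simp [hH, eval_prod]
  have heα : ∀ i : Fin p, H.eval (α i) = -(ν * ∏ j, (α i - β j)) := by
    intro i
    rw [heval]
    have h0 : ∏ j, (α i - α j) = 0 := Finset.prod_eq_zero (mem_univ i) (sub_self _)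
    rw [h0]; ring
  have heβ : ∀ i : Fin p, H.eval (β i) = μ * ∏ j, (β i - α j) := by
    intro i
    rw [heval]
    have h0 : ∏ j, (β i - β j) = 0 := Finset.prod_eq_zero (mem_univ i) (sub_self _)
    rw [h0]; ring
  -- degree facts
  have hmonα : (∏ i, (X - C (α i))).Monic := monic_prod_of_monic _ _ fun i _ => monic_X_sub_C _
  have hmonβ : (∏ i, (X - C (β i))).Monic := monic_prod_of_monic _ _ fun i _ => monic_X_sub_C _
  have hdegα : (∏ i, (X - C (α i))).natDegree = p := by
    rw [Polynomial.natDegree_prod _ _ (fun i _ => X_sub_C_ne_zero (α i))]; simp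
  have hdegβ : (∏ i, (X - C (β i))).natDegree = p := by
    rw [Polynomial.natDegree_prod _ _ (fun i _ => X_sub_C_ne_zero (β i))]; simp
  have hcoeff : H.coeff p = μ - ν := by
    have h1 : (∏ i, (X - C (α i))).coeff p = 1 := by
      have := hmonα.coeff_natDegree; rwa [hdegα] at this
    have h2 : (∏ i, (X - C (β i))).coeff p = 1 := by
      have := hmonβ.coeff_natDegree; rwa [hdegβ] at this
    simp [hH, coeff_sub, coeff_C_mul, h1, h2]
  have hμν : (0:ℝ) < μ - ν := by linarith
  have hdegle : H.natDegree ≤ p := by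
    refine le_trans (natDegree_sub_le _ _) (max_le ?_ ?_) <;>
      refine le_trans (natDegree_C_mul_le _ _) ?_
    · rw [hdegα]
    · rw [hdegβ]
  have hdegH : H.natDegree = p :=
    le_antisymm hdegle (le_natDegree_of_ne_zero (by rw [hcoeff]; exact ne_of_gt hμν))
  have hlc : H.leadingCoeff = μ - ν := by rw [leadingCoeff, hdegH, hcoeff]
  have hHne : H ≠ 0 := leadingCoeff_ne_zero.mp (by rw [hlc]; exact ne_of_gt hμν)
  have hdegpos : 0 < H.degree := natDegree_pos_iff_degree_pos.mp (by omega)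
  -- sign at last alpha
  have hlast : ∀ i : Fin p, ¬ ((i : ℕ) + 1 < p) → H.eval (α i) < 0 := by
    intro i hi
    rw [heα i]
    have hpos : 0 < ∏ j, (α i - β j) := by
      apply Finset.prod_pos
      intro j _
      have hji : j ≤ i := by
        rw [Fin.le_def]; omega
      have := hβ.monotone hji
      have := hint1 i
      linarith
    nlinarith
  -- existence of roots
  have hP : ∀ i : Fin p, ∃ x : ℝ, α i < x ∧
      (∀ h : (i : ℕ) + 1 < p, x < β ⟨(i : ℕ) + 1, h⟩) ∧ H.eval x = 0 := by
    intro i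
    by_cases h : (i : ℕ) + 1 < p
    · set b := β ⟨(i : ℕ) + 1, h⟩ with hb
      have hab : α i < b := hint2 i h
      have hsign : H.eval (α i) * H.eval b < 0 := by
        rw [heα i, heβ ⟨(i : ℕ) + 1, h⟩, ← hb]
        have hpp : 0 < ∏ j, ((α i - β j) * (b - α j)) := by
          apply Finset.prod_pos
          intro j _
          rcases le_or_gt (j : ℕ) (i : ℕ) with hji | hij
          · have h1 : β j ≤ β i := hβ.monotone (by rw [Fin.le_def]; omega)
            have h2 : α j ≤ α i := hα.monotone (by rw [Fin.le_def]; omega)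
            have := hint1 i
            exact mul_pos (by linarith) (by linarith)
          · have h1 : b ≤ β j := hβ.monotone (by rw [Fin.le_def]; simpa using hij)
            have h2 : α ⟨(i : ℕ) + 1, h⟩ ≤ α j := hα.monotone (by rw [Fin.le_def]; simpa using hij)
            have h3 : b < α ⟨(i : ℕ) + 1, h⟩ := hint1 _
            exact mul_pos_of_neg_of_neg (by linarith) (by linarith)
        rw [Finset.prod_mul_distrib] at hpp
        nlinarith [mul_pos (mul_pos hν hμ) hpp]
      have hcont : ContinuousOn (fun x => H.eval x) (Set.Icc (α i) b) :=
        (Polynomial.continuous H).continuousOn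
      rcases mul_neg_iff.mp hsign with ⟨h1, h2⟩ | ⟨h1, h2⟩
      · have : (0:ℝ) ∈ (fun x => H.eval x) '' Set.Ioo (α i) b :=
          intermediate_value_Ioo' hab.le hcont ⟨h2, h1⟩
        obtain ⟨x, hx, hfx⟩ := this
        exact ⟨x, hx.1, fun _ => hx.2, hfx⟩
      · have : (0:ℝ) ∈ (fun x => H.eval x) '' Set.Ioo (α i) b :=
          intermediate_value_Ioo hab.le hcont ⟨h1, h2⟩
        obtain ⟨x, hx, hfx⟩ := this
        exact ⟨x, hx.1, fun _ => hx.2, hfx⟩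
    · have hneg := hlast i h
      have htend : Filter.Tendsto (fun x => H.eval x) Filter.atTop Filter.atTop :=
        H.tendsto_atTop_of_leadingCoeff_nonneg hdegpos (by rw [hlc]; linarith)
      obtain ⟨x, hx1, hx2⟩ :=
        ((htend.eventually_gt_atTop 0).and (Filter.eventually_gt_atTop (α i))).exists
      have hcont : ContinuousOn (fun y => H.eval y) (Set.Icc (α i) x) :=
        (Polynomial.continuous H).continuousOn
      have : (0:ℝ) ∈ (fun y => H.eval y) '' Set.Ioo (α i) x :=
        intermediate_value_Ioo hx2.le hcont ⟨hneg, hx1⟩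
      obtain ⟨y, hy, hfy⟩ := this
      exact ⟨y, hy.1, fun h' => absurd h' h, hfy⟩
  choose γ hγ1 hγ2 hγ3 using hP
  have hγmono : StrictMono γ := by
    intro i j hij
    have h1 : (i : ℕ) + 1 < p := by
      have := j.isLt; have := (Fin.lt_def.mp hij); omega
    have h2 : γ i < β ⟨(i : ℕ) + 1, h1⟩ := hγ2 i h1
    have h3 : β ⟨(i : ℕ) + 1, h1⟩ < α ⟨(i : ℕ) + 1, h1⟩ := hint1 _
    have h4 : α ⟨(i : ℕ) + 1, h1⟩ ≤ α j :=
      hα.monotone (by rw [Fin.le_def]; exact Fin.lt_def.mp hij)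
    have h5 : α j < γ j := hγ1 j
    linarith
  refine ⟨γ, hγmono, ?_, fun i h => ⟨hγ1 i, hγ2 i h⟩, hγ1 _⟩
  -- factorization
  set M : Multiset ℝ := Multiset.map γ univ.val with hM
  have hMnodup : M.Nodup := Multiset.Nodup.map hγmono.injective univ.nodup
  have hMle : M ≤ H.roots := by
    rw [Multiset.le_iff_subset hMnodup]
    intro a ha
    obtain ⟨i, _, rfl⟩ := Multiset.mem_map.mp ha
    exact (mem_roots hHne).mpr (hγ3 i)
  have hMcard : Multiset.card M = p := by simp [hM]
  have hroots : M = H.roots := by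
    refine Multiset.eq_of_le_of_card_le hMle ?_
    rw [hMcard]
    exact hdegH ▸ H.card_roots'
  have hsplits : Splits H := splits_iff_card_roots.mpr (by rw [← hroots, hMcard, hdegH])
  have := hsplits.eq_prod_roots
  rw [← hroots, hlc, hM, Multiset.map_map] at this
  rw [hH] at this ⊢
  rw [this]
  rfl

/-- Lemma `lemma1` (root localization): if `G ≪ F` and `|μ| > |ν|`, then `F − G` has
`p` distinct real roots `γ_1 < ⋯ < γ_p` with `γ_i ∈ (α_i, β_{i+1})` for `i < p` and
`γ_p > α_p`. -/
theorem stmt_10 (p : ℕ) (hp : 1 ≤ p) (μ ν : ℝ) (hμ : μ ≠ 0) (hν : ν ≠ 0)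
    (α β : Fin p → ℝ) (hα : StrictMono α) (hβ : StrictMono β)
    (hsign : 0 < μ * ν)
    (hint1 : ∀ i, β i < α i)
    (hint2 : ∀ (i : Fin p) (h : (i : ℕ) + 1 < p), α i < β ⟨(i : ℕ) + 1, h⟩)
    (hlt : |ν| < |μ|) :
    ∃ γ : Fin p → ℝ, StrictMono γ ∧
      Polynomial.C μ * ∏ i, (Polynomial.X - Polynomial.C (α i)) -
          Polynomial.C ν * ∏ i, (Polynomial.X - Polynomial.C (β i)) =
        Polynomial.C (μ - ν) * ∏ i, (Polynomial.X - Polynomial.C (γ i)) ∧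
      (∀ (i : Fin p) (h : (i : ℕ) + 1 < p), α i < γ i ∧ γ i < β ⟨(i : ℕ) + 1, h⟩) ∧
      α ⟨p - 1, by omega⟩ < γ ⟨p - 1, by omega⟩ := by
  rcases lt_or_gt_of_ne hμ with hμneg | hμpos
  · have hνneg : ν < 0 := by nlinarith
    have hlt' : -ν < -μ := by
      rw [abs_of_neg hνneg, abs_of_neg hμneg] at hlt; linarith
    obtain ⟨γ, hmono, heq, h1, h2⟩ :=
      aux_main p hp (-μ) (-ν) (by linarith) (by linarith) hlt' α β hα hβ hint1 hint2
    refine ⟨γ, hmono, ?_, h1, h2⟩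
    have h3 : -μ - -ν = -(μ - ν) := by ring
    rw [h3, map_neg, map_neg, map_neg] at heq
    linear_combination -heq
  · have hνpos : 0 < ν := by nlinarith
    have hlt' : ν < μ := by
      rw [abs_of_pos hνpos, abs_of_pos hμpos] at hlt; linarith
    exact aux_main p hp μ ν hμpos hνpos hlt' α β hα hβ hint1 hint2
end

section
/- Let p > 1 be an integer, and let F(λ) = μ·∏_{i=1}^{p}(λ − α_i) and G(λ) = ν·∏_{i=1}^{p}(λ − β_i) be real polynomials of degree p with μ, ν ≠ 0, α_1 < ⋯ < α_p, β_1 < ⋯ < β_p, G ≪ F, and |μ| > |ν|, and let γ_1 < ⋯ < γ_p denote the p distinct real roots of F − G (which satisfy γ_i ∈ (α_i, β_{i+1}) for i < p and γ_p > α_p). For any η ∈ (0, min_{1≤i≤p−1}(α_{i+1} − α_i)), if |ν|/|μ| < min{1, (min_{1≤i≤p−1}(α_{i+1} − α_i) − η)^p}·min{1, η^p} / (2 + 2·max_{1≤j≤p}|∏_{i=1}^{p}(α_j − β_i)|), then max_{1≤i≤p}(γ_i − α_i) < η. -/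
open Polynomial

/-- Lemma `lemma1`(i): quantitative root localization for `p > 1`. Here `δ` is
`min_{1≤i≤p−1}(α_{i+1} − α_i)` and `Mx` is `max_{1≤j≤p} |∏_i (α_j − β_i)|`. -/
theorem stmt_11 (p : ℕ) (hp : 1 < p) (μ ν : ℝ)
    (α β γ : Fin p → ℝ) (hα : StrictMono α) (hβ : StrictMono β) (hγ : StrictMono γ)
    (hsign : 0 < μ * ν)
    (hint1 : ∀ i, β i < α i)
    (hint2 : ∀ (i : Fin p) (h : (i : ℕ) + 1 < p), α i < β ⟨(i : ℕ) + 1, h⟩)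
    (hlt : |ν| < |μ|)
    (hroots : Polynomial.C μ * ∏ i, (Polynomial.X - Polynomial.C (α i)) -
          Polynomial.C ν * ∏ i, (Polynomial.X - Polynomial.C (β i)) =
        Polynomial.C (μ - ν) * ∏ i, (Polynomial.X - Polynomial.C (γ i)))
    (hγloc : (∀ (i : Fin p) (h : (i : ℕ) + 1 < p), α i < γ i ∧ γ i < β ⟨(i : ℕ) + 1, h⟩) ∧
      α ⟨p - 1, by omega⟩ < γ ⟨p - 1, by omega⟩)
    (δ Mx : ℝ)
    (hδ : IsLeast (Set.range fun i : Fin (p - 1) =>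
      α ⟨(i : ℕ) + 1, by have := i.isLt; omega⟩ - α ⟨(i : ℕ), by have := i.isLt; omega⟩) δ)
    (hMx : IsGreatest (Set.range fun j : Fin p => |∏ i, (α j - β i)|) Mx)
    (η : ℝ) (hη1 : 0 < η) (hη2 : η < δ)
    (hbound : |ν| / |μ| <
      min 1 ((δ - η) ^ p) * min 1 (η ^ p) / (2 + 2 * Mx)) :
    ∀ i, γ i - α i < η := by
  have hδη : 0 < δ - η := by linarith
  have hMx0 : 0 ≤ Mx := by
    obtain ⟨j, hj⟩ := hMx.1
    rw [← hj]; positivity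
  have hμ : 0 < |μ| := lt_of_le_of_lt (abs_nonneg ν) hlt
  set m : ℝ := min 1 ((δ - η) ^ p) * min 1 (η ^ p) with hm
  have hm0 : 0 < m := mul_pos (lt_min one_pos (pow_pos hδη p)) (lt_min one_pos (pow_pos hη1 p))
  have hm1 : m ≤ 1 :=
    mul_le_one₀ (min_le_left _ _) (le_of_lt (lt_min one_pos (pow_pos hη1 p))) (min_le_left _ _)
  -- γ i > α i for all i
  have hγgt : ∀ i : Fin p, α i < γ i := by
    intro i
    by_cases h : (i : ℕ) + 1 < p
    · exact (hγloc.1 i h).1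
    · have hi : i = ⟨p - 1, by omega⟩ := by
        apply Fin.ext
        have := i.isLt
        simp only []
        omega
      rw [hi]
      exact hγloc.2
  -- gap estimate
  have hgap : ∀ i k : Fin p, i < k → δ ≤ α k - α i := by
    intro i k hik
    have hik' : (i : ℕ) < (k : ℕ) := hik
    have h1 : (i : ℕ) < p - 1 := by have := k.isLt; omega
    have h2 := hδ.2 (Set.mem_range_self (⟨(i : ℕ), h1⟩ : Fin (p - 1)))
    have h3 : α ⟨(i : ℕ) + 1, by omega⟩ ≤ α k := by
      apply hα.monotone
      rw [Fin.le_def]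
      simpa using hik'
    have h4 : (⟨(i : ℕ), by omega⟩ : Fin p) = i := Fin.ext rfl
    simp only [h4] at h2
    calc δ ≤ α ⟨(i : ℕ) + 1, by omega⟩ - α i := h2
    _ ≤ α k - α i := by linarith
  -- row estimate from the polynomial identity
  have hrow : ∀ j : Fin p, |μ - ν| * ∏ i, |α j - γ i| ≤ |ν| * Mx := by
    intro j
    have h := congrArg (Polynomial.eval (α j)) hroots
    simp only [Polynomial.eval_sub, Polynomial.eval_mul, Polynomial.eval_C,
      Polynomial.eval_prod, Polynomial.eval_X] at h
    have hz : (∏ i, (α j - α i)) = 0 :=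
      Finset.prod_eq_zero (Finset.mem_univ j) (sub_self _)
    rw [hz, mul_zero, zero_sub] at h
    have habs := congrArg abs h
    rw [abs_neg, abs_mul, abs_mul, Finset.abs_prod, Finset.abs_prod] at habs
    rw [← habs]
    have hb := hMx.2 (Set.mem_range_self j)
    rw [Finset.abs_prod] at hb
    exact mul_le_mul_of_nonneg_left hb (abs_nonneg ν)
  -- main claim by strong induction on the index
  have main : ∀ n : ℕ, ∀ j : Fin p, (j : ℕ) = n → γ j - α j < η := by
    intro n
    induction n using Nat.strong_induction_on with
    | _ n IH =>
      intro j hjn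
      by_contra hc
      push_neg at hc
      -- lower bound for the product ∏ |α j - γ i|
      have hfj : min 1 (η ^ p) ≤ |α j - γ j| := by
        have h1 : min 1 (η ^ p) ≤ η := by
          rcases le_total η 1 with h | h
          · calc min 1 (η ^ p) ≤ η ^ p := min_le_right _ _
            _ ≤ η ^ 1 := pow_le_pow_of_le_one hη1.le h (by omega)
            _ = η := pow_one η
          · exact le_trans (min_le_left _ _) h
        rw [abs_sub_comm, abs_of_pos (by linarith)]
        linarith
      have hfi : ∀ i ∈ Finset.univ.erase j, min 1 (δ - η) ≤ |α j - γ i| := by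
        intro i hi
        have hij : i ≠ j := Finset.ne_of_mem_erase hi
        rcases lt_or_gt_of_ne hij with hlt' | hlt'
        · -- i < j : use induction hypothesis
          have hIH : γ i - α i < η := IH (i : ℕ) (by have h := Fin.lt_def.mp hlt'; omega) i rfl
          have hg : δ ≤ α j - α i := hgap i j hlt'
          have hpos : 0 < α j - γ i := by linarith
          rw [abs_of_pos hpos]
          calc min 1 (δ - η) ≤ δ - η := min_le_right _ _
          _ ≤ α j - γ i := by linarith
        · -- j < i
          have hg : δ ≤ α i - α j := hgap j i hlt'
          have hγi := hγgt i
          have hpos : 0 < γ i - α j := by linarith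
          rw [abs_sub_comm, abs_of_pos hpos]
          calc min 1 (δ - η) ≤ δ - η := min_le_right _ _
          _ ≤ γ i - α j := by linarith
      have hcard : (Finset.univ.erase j).card = p - 1 := by
        rw [Finset.card_erase_of_mem (Finset.mem_univ j)]
        simp
      have hminpow : min 1 ((δ - η) ^ p) ≤ (min 1 (δ - η)) ^ (p - 1) := by
        rcases le_total (δ - η) 1 with h | h
        · rw [min_eq_right h]
          calc min 1 ((δ - η) ^ p) ≤ (δ - η) ^ p := min_le_right _ _
          _ ≤ (δ - η) ^ (p - 1) := pow_le_pow_of_le_one hδη.le h (by omega)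
        · rw [min_eq_left h, one_pow]
          exact min_le_left _ _
      have hprod1 : (min 1 (δ - η)) ^ (p - 1) ≤ ∏ i ∈ Finset.univ.erase j, |α j - γ i| := by
        calc (min 1 (δ - η)) ^ (p - 1)
            = ∏ _i ∈ Finset.univ.erase j, min 1 (δ - η) := by
              rw [Finset.prod_const, hcard]
        _ ≤ ∏ i ∈ Finset.univ.erase j, |α j - γ i| :=
              Finset.prod_le_prod (fun i _ => le_min zero_le_one hδη.le) hfi
      have hlow : m ≤ ∏ i, |α j - γ i| := by
        have hsplit : |α j - γ j| * ∏ i ∈ Finset.univ.erase j, |α j - γ i|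
            = ∏ i, |α j - γ i| :=
          Finset.mul_prod_erase Finset.univ (fun i => |α j - γ i|) (Finset.mem_univ j)
        rw [← hsplit, hm]
        have h1 : (0:ℝ) ≤ min 1 ((δ - η) ^ p) := le_min zero_le_one (pow_pos hδη p).le
        have h2 : (0:ℝ) ≤ min 1 (η ^ p) := le_min zero_le_one (pow_pos hη1 p).le
        calc min 1 ((δ - η) ^ p) * min 1 (η ^ p)
            ≤ (∏ i ∈ Finset.univ.erase j, |α j - γ i|) * |α j - γ j| := by
              apply mul_le_mul (le_trans hminpow hprod1) hfj h2
              exact le_trans h1 (le_trans hminpow hprod1)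
        _ = |α j - γ j| * ∏ i ∈ Finset.univ.erase j, |α j - γ i| := mul_comm _ _
      -- combine everything
      rw [div_lt_div_iff₀ hμ (by linarith : (0:ℝ) < 2 + 2 * Mx)] at hbound
      have habsub : |μ| - |ν| ≤ |μ - ν| := abs_sub_abs_le_abs_sub μ ν
      have hprod : |μ - ν| * m ≤ |ν| * Mx :=
        le_trans (mul_le_mul_of_nonneg_left hlow (abs_nonneg _)) (hrow j)
      have h2 : (|μ| - |ν|) * m ≤ |ν| * Mx :=
        le_trans (mul_le_mul_of_nonneg_right habsub hm0.le) hprod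
      have h3 : |ν| * m ≤ |ν| := mul_le_of_le_one_right (abs_nonneg ν) hm1
      have h4 : 0 ≤ |ν| * Mx := mul_nonneg (abs_nonneg ν) hMx0
      nlinarith [abs_nonneg ν]
  intro i
  exact main (i : ℕ) i rfl
end

section
/- Let F(λ) = (λ − α_1)(λ − α_2) and G(λ) = λ − β_1 be real polynomials whose roots satisfy α_2 ∈ [λ_2, Λ), λ_1 ≤ α_1, α_1 + C_1^n·ρ_1 < β_1, β_1 < λ_1 + (1 + C_2(1))^n·ρ_1, and λ_1 + (1 + C_2(1))^n·ρ_1 < λ_2. Let M > 0 and let μ, ν, m* be real numbers with 0 < m* < M and −μ/ν > C·M. Then there exist real numbers λ* > 0, b* > 0, α'_1 ∈ (α_1, λ_2), and μ_0, ν_0 with −μ_0/ν_0 > −μ/ν − m* such that the polynomials F_0(λ) = λ − α'_1 and G_0(λ) = 1 satisfy the identities μ·F(λ) = −m*·ν·λ·G(λ) + b*·μ_0·(λ* − λ)·F_0(λ) and ν·G(λ) = μ_0·F_0(λ) + b*·ν_0·(λ* − λ)·G_0(λ) in ℝ[λ]. -/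
open Polynomial

/-- `Δ = (1/2)·min{1, min_{1≤i≤m−1}(λ_{i+1} − λ_i)}`. -/
noncomputable def Del (m : ℕ) (lam : ℕ → ℝ) : ℝ :=
  (1 / 2) * min 1 (sInf ((fun i => lam (i + 1) - lam i) '' Set.Icc 1 (m - 1)))

/-- `Λ = 1 + λ_m`. -/
noncomputable def Lamb (m : ℕ) (lam : ℕ → ℝ) : ℝ := 1 + lam m

/-- `ε = Δ^{n²+n+1}/(n·2^{3(n+1)³}·Λ^{(n+1)²})`. -/
noncomputable def eps (n m : ℕ) (lam : ℕ → ℝ) : ℝ :=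
  Del m lam ^ (n ^ 2 + n + 1) /
    ((n : ℝ) * 2 ^ (3 * (n + 1) ^ 3) * Lamb m lam ^ ((n + 1) ^ 2))

/-- `ρ_i = ε^{(n+1)^{m−i}}`. -/
noncomputable def rho (n m : ℕ) (lam : ℕ → ℝ) (i : ℕ) : ℝ :=
  eps n m lam ^ ((n + 1) ^ (m - i))

/-- `C_1 = Δ/(2^{n+1}Λ)`. -/
noncomputable def Cone (n m : ℕ) (lam : ℕ → ℝ) : ℝ :=
  Del m lam / (2 ^ (n + 1) * Lamb m lam)

/-- `C_2(j) = 2^{2(n+1)²}·Λ^{n+1}/(Δ^n·ε^{(n+1)^{m−j−1}})`. -/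
noncomputable def Ctwo (n m : ℕ) (lam : ℕ → ℝ) (j : ℕ) : ℝ :=
  2 ^ (2 * (n + 1) ^ 2) * Lamb m lam ^ (n + 1) /
    (Del m lam ^ n * eps n m lam ^ ((n + 1) ^ (m - j - 1)))

/-- `C = 2^{2n+1}(1 + Λ^n)/(C_1^{2n²}·ρ_1^{2n})`. -/
noncomputable def CC (n m : ℕ) (lam : ℕ → ℝ) : ℝ :=
  2 ^ (2 * n + 1) * (1 + Lamb m lam ^ n) /
    (Cone n m lam ^ (2 * n ^ 2) * rho n m lam 1 ^ (2 * n))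


private lemma key1 {R : Type*} [CommRing R] (μ ν mstar α₁ α₂ β₁ bstar μ₀ lamstar α₁' x : R)
    (hb : bstar * μ₀ = -(μ + mstar * ν))
    (hS : (μ + mstar * ν) * (lamstar + α₁') = μ * (α₁ + α₂) + mstar * ν * β₁)
    (hP : (μ + mstar * ν) * (lamstar * α₁') = μ * (α₁ * α₂)) :
    μ * ((x - α₁) * (x - α₂)) =
      -(mstar * ν) * x * (x - β₁) + bstar * μ₀ * (lamstar - x) * (x - α₁') := by
  linear_combination (-(lamstar - x) * (x - α₁')) * hb + x * hS - hP

private lemma key2 {R : Type*} [CommRing R] (ν β₁ μ₀ α₁' bstar ν₀ lamstar x : R)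
    (h4 : μ₀ - bstar * ν₀ = ν)
    (h5 : bstar * ν₀ * lamstar - μ₀ * α₁' = -(ν * β₁)) :
    ν * (x - β₁) = μ₀ * (x - α₁') + bstar * ν₀ * (lamstar - x) * 1 := by
  linear_combination -x * h4 - h5

lemma disc_pos {S P D b : ℝ} (hD : D = S ^ 2 - 4 * P) (hq : b ^ 2 - S * b + P < 0) :
    0 < D := by nlinarith [sq_nonneg (2 * b - S)]

lemma roots_between {b l r : ℝ} (hlr : r < l) (h1 : (b - l) * (b - r) < 0) :
    r < b ∧ b < l := by
  constructor
  · by_contra h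
    push_neg at h
    nlinarith
  · by_contra h
    push_neg at h
    nlinarith

lemma roots_outside {a l r : ℝ} (hlr : r < l) (hal : a < l)
    (h2 : 0 < (a - l) * (a - r)) : a < r := by
  by_contra h
  push_neg at h
  nlinarith

set_option maxHeartbeats 1000000 in
private lemma stmt_15_aux (α₁ α₂ β₁ μ ν mstar : ℝ)
    (hν : ν ≠ 0)
    (hα₁pos : 0 < α₁) (hαβ : α₁ < β₁) (hβα₂ : β₁ < α₂)
    (hmspos : 0 < mstar)
    (h0 : 0 < -μ / ν - mstar) :
    ∃ (lamstar bstar α₁' μ₀ ν₀ : ℝ),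
      0 < lamstar ∧ 0 < bstar ∧
      α₁ < α₁' ∧ α₁' < β₁ ∧ β₁ < lamstar ∧
      -μ₀ / ν₀ > -μ / ν - mstar ∧
      bstar * μ₀ = -(μ + mstar * ν) ∧
      (μ + mstar * ν) * (lamstar + α₁') = μ * (α₁ + α₂) + mstar * ν * β₁ ∧
      (μ + mstar * ν) * (lamstar * α₁') = μ * (α₁ * α₂) ∧
      μ₀ - bstar * ν₀ = ν ∧
      bstar * ν₀ * lamstar - μ₀ * α₁' = -(ν * β₁) := by
  obtain ⟨c, hcdef⟩ : ∃ c : ℝ, c = μ + mstar * ν := ⟨_, rfl⟩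
  have hcν' : 0 < (-c) / ν := by
    have h : (-c) / ν = -μ / ν - mstar := by
      rw [hcdef]; field_simp; ring
    rw [h]; exact h0
  have hc : c ≠ 0 := by
    intro h
    rw [h] at hcν'; simp at hcν'
  have hνc : ν / c < 0 := by
    rcases div_pos_iff.mp hcν' with ⟨h1, h2⟩ | ⟨h1, h2⟩
    · exact div_neg_of_pos_of_neg h2 (by linarith)
    · exact div_neg_of_neg_of_pos h2 (by linarith)
  have hμc : 0 < μ / c := by
    have h : μ / c = 1 - mstar * (ν / c) := by
      field_simp
      linear_combination -hcdef
    have hneg : mstar * (ν / c) < 0 := mul_neg_of_pos_of_neg hmspos hνc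
    rw [h]; linarith
  obtain ⟨S, hSdef⟩ : ∃ S : ℝ, S = (μ * (α₁ + α₂) + mstar * ν * β₁) / c := ⟨_, rfl⟩
  obtain ⟨P, hPdef⟩ : ∃ P : ℝ, P = μ * (α₁ * α₂) / c := ⟨_, rfl⟩
  have hcS : c * S = μ * (α₁ + α₂) + mstar * ν * β₁ := by
    rw [hSdef]; field_simp
  have hcP : c * P = μ * (α₁ * α₂) := by
    rw [hPdef]; field_simp
  have hq1 : c * (β₁ ^ 2 - S * β₁ + P) = μ * ((β₁ - α₁) * (β₁ - α₂)) := by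
    linear_combination β₁ ^ 2 * hcdef - β₁ * hcS + hcP
  have hq2 : c * (α₁ ^ 2 - S * α₁ + P) = mstar * ν * (α₁ * (α₁ - β₁)) := by
    linear_combination α₁ ^ 2 * hcdef - α₁ * hcS + hcP
  have hqβ : β₁ ^ 2 - S * β₁ + P = (μ / c) * ((β₁ - α₁) * (β₁ - α₂)) := by
    field_simp
    linear_combination hq1
  have hqα : α₁ ^ 2 - S * α₁ + P = (mstar * (ν / c)) * (α₁ * (α₁ - β₁)) := by
    field_simp
    linear_combination hq2
  have hqβneg : β₁ ^ 2 - S * β₁ + P < 0 := by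
    rw [hqβ]
    apply mul_neg_of_pos_of_neg hμc
    apply mul_neg_of_pos_of_neg (by linarith)
    linarith
  have hqαpos : 0 < α₁ ^ 2 - S * α₁ + P := by
    rw [hqα]
    apply mul_pos_of_neg_of_neg
    · exact mul_neg_of_pos_of_neg hmspos hνc
    · apply mul_neg_of_pos_of_neg hα₁pos; linarith
  obtain ⟨D, hDdef⟩ : ∃ D : ℝ, D = S ^ 2 - 4 * P := ⟨_, rfl⟩
  have hD : 0 < D := disc_pos hDdef hqβneg
  obtain ⟨sd, hsddef⟩ : ∃ sd : ℝ, sd = Real.sqrt D := ⟨_, rfl⟩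
  have hsd2 : sd ^ 2 = D := by rw [hsddef]; exact Real.sq_sqrt hD.le
  have hsdpos : 0 < sd := by rw [hsddef]; exact Real.sqrt_pos.mpr hD
  obtain ⟨lamstar, hlsdef⟩ : ∃ l : ℝ, l = (S + sd) / 2 := ⟨_, rfl⟩
  obtain ⟨α₁', hα'def⟩ : ∃ a : ℝ, a = (S - sd) / 2 := ⟨_, rfl⟩
  have hsum : lamstar + α₁' = S := by rw [hlsdef, hα'def]; ring
  have hdiff : lamstar - α₁' = sd := by rw [hlsdef, hα'def]; ring
  have hprod : lamstar * α₁' = P := by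
    rw [hlsdef, hα'def]
    have h : (S + sd) / 2 * ((S - sd) / 2) = (S ^ 2 - sd ^ 2) / 4 := by ring
    rw [h, hsd2, hDdef]; ring
  have h1 : (β₁ - lamstar) * (β₁ - α₁') < 0 := by
    have h : (β₁ - lamstar) * (β₁ - α₁') = β₁ ^ 2 - S * β₁ + P := by
      rw [← hsum, ← hprod]; ring
    rw [h]; exact hqβneg
  have h2 : 0 < (α₁ - lamstar) * (α₁ - α₁') := by
    have h : (α₁ - lamstar) * (α₁ - α₁') = α₁ ^ 2 - S * α₁ + P := by
      rw [← hsum, ← hprod]; ring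
    rw [h]; exact hqαpos
  have hrl : α₁' < lamstar := by linarith [hdiff, hsdpos]
  obtain ⟨hα₁'β, hβlam⟩ := roots_between hrl h1
  have hα₁α₁' : α₁ < α₁' := roots_outside hrl (by linarith) h2
  obtain ⟨bstar, hbdef⟩ : ∃ b : ℝ, b = ((-c) / ν) * (sd / (lamstar - β₁)) := ⟨_, rfl⟩
  obtain ⟨μ₀, hμ₀def⟩ : ∃ x : ℝ, x = ν * (lamstar - β₁) / sd := ⟨_, rfl⟩
  obtain ⟨B, hBdef⟩ : ∃ x : ℝ, x = ν * (α₁' - β₁) / sd := ⟨_, rfl⟩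
  obtain ⟨ν₀, hν₀def⟩ : ∃ x : ℝ, x = B / bstar := ⟨_, rfl⟩
  have hlb : lamstar - β₁ ≠ 0 := by linarith
  have hbpos : 0 < bstar := by
    rw [hbdef]; exact mul_pos hcν' (div_pos hsdpos (by linarith))
  have hbμ : bstar * μ₀ = -c := by
    rw [hbdef, hμ₀def]
    field_simp
  have hbν : bstar * ν₀ = B := by
    rw [hν₀def]; exact mul_div_cancel₀ B hbpos.ne'
  refine ⟨lamstar, bstar, α₁', μ₀, ν₀, by linarith, hbpos, hα₁α₁', hα₁'β, hβlam,
    ?_, ?_, ?_, ?_, ?_, ?_⟩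
  · have hαβ' : β₁ - α₁' ≠ 0 := by linarith
    have hμ₀b : -μ₀ * bstar = c := by linear_combination -hbμ
    have hval : -μ₀ / ν₀ = ((-c) / ν) * (sd / (β₁ - α₁')) := by
      have hne1 : ν * (α₁' - β₁) ≠ 0 := mul_ne_zero hν (sub_ne_zero.mpr hα₁'β.ne)
      have hne2 : ν * (β₁ - α₁') ≠ 0 := mul_ne_zero hν (sub_ne_zero.mpr hα₁'β.ne')
      rw [hν₀def, div_div_eq_mul_div, hμ₀b, hBdef]
      rw [div_div_eq_mul_div, div_mul_div_comm, div_eq_div_iff hne1 hne2]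
      ring
    have hrhs : (-c) / ν = -μ / ν - mstar := by
      rw [hcdef]; field_simp; ring
    rw [hval, hrhs]
    have hgt1 : 1 < sd / (β₁ - α₁') := by
      rw [lt_div_iff₀ (by linarith)]
      linarith
    have hlt := (mul_lt_mul_iff_right₀ h0).mpr hgt1
    rw [mul_one] at hlt
    exact hlt
  · rw [hbμ, hcdef]
  · rw [hsum, ← hcdef]; exact hcS
  · rw [hprod, ← hcdef]; exact hcP
  · rw [hbν, hμ₀def, hBdef]
    rw [div_sub_div_same, div_eq_iff hsdpos.ne']
    linear_combination ν * hdiff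
  · rw [hbν, hμ₀def, hBdef]
    rw [div_mul_eq_mul_div, div_mul_eq_mul_div, div_sub_div_same, div_eq_iff hsdpos.ne']
    linear_combination (-(ν * β₁)) * hdiff

set_option maxHeartbeats 1000000 in
/-- Lemma `cas1`(ii): the case `p = 2`. -/
theorem stmt_15 (n m : ℕ) (hm : 2 ≤ m) (hmn : m ≤ n) (lam : ℕ → ℝ)
    (hpos : 0 < lam 1) (hmono : ∀ i, 1 ≤ i → i < m → lam i < lam (i + 1))
    (α₁ α₂ β₁ : ℝ)
    (hα₂ : lam 2 ≤ α₂ ∧ α₂ < Lamb m lam)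
    (hα₁ : lam 1 ≤ α₁)
    (hβ₁ : α₁ + Cone n m lam ^ n * rho n m lam 1 < β₁ ∧
      β₁ < lam 1 + (1 + Ctwo n m lam 1) ^ n * rho n m lam 1 ∧
      lam 1 + (1 + Ctwo n m lam 1) ^ n * rho n m lam 1 < lam 2)
    (MM μ ν mstar : ℝ) (hMM : 0 < MM) (hms : 0 < mstar ∧ mstar < MM)
    (hν : ν ≠ 0) (hμν : -μ / ν > CC n m lam * MM) :
    ∃ (lamstar bstar α₁' μ₀ ν₀ : ℝ),
      0 < lamstar ∧ 0 < bstar ∧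
      α₁ < α₁' ∧ α₁' < lam 2 ∧
      -μ₀ / ν₀ > -μ / ν - mstar ∧
      Polynomial.C μ * ((Polynomial.X - Polynomial.C α₁) * (Polynomial.X - Polynomial.C α₂)) =
        -(Polynomial.C mstar * Polynomial.C ν) * Polynomial.X *
            (Polynomial.X - Polynomial.C β₁) +
          Polynomial.C bstar * Polynomial.C μ₀ * (Polynomial.C lamstar - Polynomial.X) *
            (Polynomial.X - Polynomial.C α₁') ∧
      Polynomial.C ν * (Polynomial.X - Polynomial.C β₁) =
        Polynomial.C μ₀ * (Polynomial.X - Polynomial.C α₁') +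
          Polynomial.C bstar * Polynomial.C ν₀ * (Polynomial.C lamstar - Polynomial.X) * 1 := by
  -- basic facts about the constants
  have hchain : ∀ j, 1 ≤ j → j ≤ m → lam 1 ≤ lam j := by
    intro j h1 h2
    induction j with
    | zero => omega
    | succ k ih =>
      rcases Nat.lt_or_ge k 1 with h | h
      · interval_cases k
        · simp
      · exact le_trans (ih h (by omega)) (le_of_lt (hmono k h (by omega)))
  have hΛ : 1 < Lamb m lam := by
    have := hchain m (by omega) le_rfl
    unfold Lamb; linarith
  have hne : ((fun i => lam (i + 1) - lam i) '' Set.Icc 1 (m - 1)).Nonempty :=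
    ⟨lam 2 - lam 1, ⟨1, ⟨le_refl 1, by omega⟩, rfl⟩⟩
  have hfin : ((fun i => lam (i + 1) - lam i) '' Set.Icc 1 (m - 1)).Finite :=
    (Set.finite_Icc _ _).image _
  obtain ⟨i, hi, heq⟩ := hne.csInf_mem hfin
  rw [Set.mem_Icc] at hi
  have hΔpos : 0 < Del m lam := by
    have h1 : 0 < lam (i + 1) - lam i := by
      have := hmono i hi.1 (by omega)
      linarith
    have h2 : 0 < sInf ((fun i => lam (i + 1) - lam i) '' Set.Icc 1 (m - 1)) :=
      lt_of_lt_of_eq h1 heq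
    have h3 : 0 < min 1 (sInf ((fun i => lam (i + 1) - lam i) '' Set.Icc 1 (m - 1))) :=
      lt_min one_pos h2
    unfold Del; linarith
  have hΔle : Del m lam ≤ 1 / 2 := by
    unfold Del
    have := min_le_left (1:ℝ) (sInf ((fun i => lam (i + 1) - lam i) '' Set.Icc 1 (m - 1)))
    linarith
  have hn2 : (2:ℝ) ≤ (n:ℝ) := by exact_mod_cast le_trans hm hmn
  have h2pow : (1:ℝ) ≤ 2 ^ (3 * (n + 1) ^ 3) := one_le_pow₀ (by norm_num)
  have hΛpow : (1:ℝ) ≤ Lamb m lam ^ ((n + 1) ^ 2) := one_le_pow₀ (by linarith)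
  have hden1 : (1:ℝ) ≤ (n : ℝ) * 2 ^ (3 * (n + 1) ^ 3) * Lamb m lam ^ ((n + 1) ^ 2) := by
    have h := mul_le_mul (mul_le_mul (by linarith : (1:ℝ) ≤ (n:ℝ)) h2pow (by norm_num)
      (by linarith)) hΛpow (by norm_num) (by positivity)
    simpa using h
  have hεpos : 0 < eps n m lam := by
    unfold eps
    exact div_pos (pow_pos hΔpos _) (by linarith)
  have hεle : eps n m lam ≤ 1 := by
    unfold eps
    rw [div_le_one (by linarith)]
    have h1 : Del m lam ^ (n ^ 2 + n + 1) ≤ 1 := pow_le_one₀ hΔpos.le (by linarith)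
    linarith
  have hρpos : 0 < rho n m lam 1 := pow_pos hεpos _
  have hρle : rho n m lam 1 ≤ 1 := pow_le_one₀ hεpos.le hεle
  have hC1pos : 0 < Cone n m lam := by
    unfold Cone
    exact div_pos hΔpos (by positivity)
  have hC1le : Cone n m lam ≤ 1 := by
    unfold Cone
    rw [div_le_one (by positivity)]
    have h2 : (1:ℝ) ≤ 2 ^ (n + 1) := one_le_pow₀ (by norm_num)
    nlinarith
  have hCC : 1 < CC n m lam := by
    unfold _root_.CC
    rw [lt_div_iff₀ (by positivity)]
    have hd1 : Cone n m lam ^ (2 * n ^ 2) ≤ 1 := pow_le_one₀ hC1pos.le hC1le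
    have hd2 : rho n m lam 1 ^ (2 * n) ≤ 1 := pow_le_one₀ hρpos.le hρle
    have hd1' : 0 < Cone n m lam ^ (2 * n ^ 2) := pow_pos hC1pos _
    have hd2' : 0 < rho n m lam 1 ^ (2 * n) := pow_pos hρpos _
    have hnum : (2:ℝ) ≤ 2 ^ (2 * n + 1) := by
      calc (2:ℝ) = 2 ^ 1 := by norm_num
      _ ≤ 2 ^ (2 * n + 1) := pow_le_pow_right₀ (by norm_num) (by omega)
    have hΛn : (1:ℝ) ≤ Lamb m lam ^ n := one_le_pow₀ (by linarith)
    nlinarith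
  -- hypotheses for the auxiliary construction
  have hMMlt : MM < CC n m lam * MM := by nlinarith
  have h0 : 0 < -μ / ν - mstar := by linarith [hms.2, hμν]
  have hα₁pos : 0 < α₁ := lt_of_lt_of_le hpos hα₁
  have hαβ : α₁ < β₁ := by
    have hx : 0 < Cone n m lam ^ n * rho n m lam 1 := mul_pos (pow_pos hC1pos n) hρpos
    linarith [hβ₁.1]
  have hβlam2 : β₁ < lam 2 := lt_trans hβ₁.2.1 hβ₁.2.2
  have hβα₂ : β₁ < α₂ := lt_of_lt_of_le hβlam2 hα₂.1
  obtain ⟨lamstar, bstar, α₁', μ₀, ν₀, hls, hbs, ha1, ha2, ha3, hgt, e1, e2, e3, e4, e5⟩ :=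
    stmt_15_aux α₁ α₂ β₁ μ ν mstar hν hα₁pos hαβ hβα₂ hms.1 h0
  refine ⟨lamstar, bstar, α₁', μ₀, ν₀, hls, hbs, ha1, lt_trans ha2 hβlam2, hgt, ?_, ?_⟩
  · have E1 := congrArg (Polynomial.C (R := ℝ)) e1
    have E2 := congrArg (Polynomial.C (R := ℝ)) e2
    have E3 := congrArg (Polynomial.C (R := ℝ)) e3
    simp only [map_mul, map_add, map_neg] at E1 E2 E3
    exact key1 _ _ _ _ _ _ _ _ _ _ Polynomial.X E1 E2 E3
  · have E4 := congrArg (Polynomial.C (R := ℝ)) e4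
    have E5 := congrArg (Polynomial.C (R := ℝ)) e5
    simp only [map_mul, map_add, map_neg, map_sub] at E4 E5
    exact key2 _ _ _ _ _ _ _ Polynomial.X E4 E5
end

section
/- Let λ* and α_1 be real numbers with λ_1 ≤ α_1 < λ* < Λ, and let μ, ν be real numbers with μ/ν < 0. Set F(λ) = λ − α_1 and G(λ) = 1. Then there exist real numbers m* > 0, b* > 0 and μ_0, ν_0 with −μ_0/ν_0 > −(λ_1/Λ)·(μ/ν) such that the polynomials F_0(λ) = λ − λ* and G_0(λ) = 1 satisfy the identities μ·F(λ) = −m*·ν·λ·G(λ) − b*·μ_0·F_0(λ) and ν·(λ − λ*)·G(λ) = μ_0·F_0(λ) + b*·ν_0·(λ* − λ)·G_0(λ) in ℝ[λ]. -/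
open Polynomial

/-- Lemma `cas2`(ii): the case `F(λ) = λ − α₁`, `G(λ) = 1`; here `Λ = 1 + λ_m`. -/
theorem stmt_17 (n m : ℕ) (hm : 2 ≤ m) (hmn : m ≤ n) (lam : ℕ → ℝ)
    (hpos : 0 < lam 1) (hmono : ∀ i, 1 ≤ i → i < m → lam i < lam (i + 1))
    (α₁ lamstar : ℝ) (hα₁ : lam 1 ≤ α₁) (h₁ : α₁ < lamstar) (h₂ : lamstar < 1 + lam m)
    (μ ν : ℝ) (hν : ν ≠ 0) (hμν : μ / ν < 0) :
    ∃ mstar bstar μ₀ ν₀ : ℝ,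
      0 < mstar ∧ 0 < bstar ∧
      -μ₀ / ν₀ > -(lam 1 / (1 + lam m)) * (μ / ν) ∧
      Polynomial.C μ * (Polynomial.X - Polynomial.C α₁) =
        -(Polynomial.C mstar * Polynomial.C ν) * Polynomial.X * 1 -
          Polynomial.C bstar * Polynomial.C μ₀ * (Polynomial.X - Polynomial.C lamstar) ∧
      Polynomial.C ν * (Polynomial.X - Polynomial.C lamstar) * 1 =
        Polynomial.C μ₀ * (Polynomial.X - Polynomial.C lamstar) +
          Polynomial.C bstar * Polynomial.C ν₀ * (Polynomial.C lamstar - Polynomial.X) * 1 := by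
  have hα : 0 < α₁ := lt_of_lt_of_le hpos hα₁
  have hls : 0 < lamstar := lt_trans hα h₁
  have hL : 0 < 1 + lam m := lt_trans hls h₂
  set s : ℝ := -(μ / ν) with hs_def
  have hs : 0 < s := by simpa [hs_def] using neg_pos.mpr hμν
  set c : ℝ := s * α₁ / lamstar with hc_def
  have hc : 0 < c := by positivity
  refine ⟨s * (lamstar - α₁) / lamstar, 2 * c, ν / 2, -ν / (4 * c), ?_, ?_, ?_, ?_, ?_⟩
  · have : 0 < lamstar - α₁ := by linarith
    positivity
  · positivity
  · have hval : -(ν / 2) / (-ν / (4 * c)) = 2 * c := by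
      field_simp
      ring
    rw [hval]
    have h1 : lam 1 / (1 + lam m) < α₁ / lamstar := by
      rw [div_lt_div_iff₀ hL hls]
      nlinarith
    have : -(lam 1 / (1 + lam m)) * (μ / ν) = (lam 1 / (1 + lam m)) * s := by
      rw [hs_def]; ring
    rw [this]
    have h2 : (lam 1 / (1 + lam m)) * s < (α₁ / lamstar) * s :=
      (mul_lt_mul_of_pos_right h1 hs)
    have h3 : (α₁ / lamstar) * s < 2 * c := by
      rw [hc_def]
      have : (α₁ / lamstar) * s = s * α₁ / lamstar := by ring
      rw [this]
      nlinarith [div_pos (mul_pos hs hα) hls]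
    linarith
  · -- first polynomial identity
    have e1 : μ = -(s * (lamstar - α₁) / lamstar * ν) - (2 * c) * (ν / 2) := by
      rw [hc_def, hs_def]
      field_simp
      ring
    have e2 : (2 * c) * (ν / 2) * lamstar = -(μ * α₁) := by
      rw [hc_def, hs_def]
      field_simp
    have h1 : (C μ : ℝ[X]) =
        -(C (s * (lamstar - α₁) / lamstar) * C ν) - C (2 * c) * C (ν / 2) := by
      rw [← C_mul, ← C_mul, ← C_neg, ← C_sub, ← e1]
    have h2 : (C (2 * c) : ℝ[X]) * C (ν / 2) * C lamstar = -(C μ * C α₁) := by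
      rw [← C_mul, ← C_mul, ← C_mul, ← C_neg, e2]
    linear_combination (Polynomial.X : ℝ[X]) * h1 - h2
  · -- second polynomial identity
    have e3 : ν = ν / 2 - (2 * c) * (-ν / (4 * c)) := by
      field_simp
      ring
    have h3 : (C ν : ℝ[X]) = C (ν / 2) - C (2 * c) * C (-ν / (4 * c)) := by
      rw [← C_mul, ← C_sub, ← e3]
    linear_combination ((Polynomial.X : ℝ[X]) - C lamstar) * h3
end
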